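/- Let K be a field with char(K) ≠ 2, 3, λ ∈ K, t the 3×3 Jordan block with eigenvalue λ (ones on the superdiagonal), and y the 3×3 matrix with ones on the subdiagonal and zeros elsewhere. Then t, t∘y, (t∘y)∘y, ((t∘y)∘y)∘y are linearly independent over K. -/

import Mathlib

/-- The Jordan product `x ∘ y = xy + yx`. -/
def jordan {A : Type*} [Mul A] [Add A] (x y : A) : A := x * y + y * x

set_option maxHeartbeats 2000000 in
/-- For `t = λI + E₁₂ + E₂₃` (a 3×3 Jordan block with eigenvalue `λ`)
and `y = E₂₁ + E₃₂`, over a field of characteristic ≠ 2, 3, the matrices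
`t, t∘y, (t∘y)∘y, ((t∘y)∘y)∘y` are linearly independent. -/
theorem stmt12 {K : Type*} [Field K] (hch2 : (2 : K) ≠ 0) (hch3 : (3 : K) ≠ 0)
    (lam : K)
    (t : Matrix (Fin 3) (Fin 3) K)
    (ht : t = lam • (1 : Matrix (Fin 3) (Fin 3) K) +
      Matrix.single 0 1 1 + Matrix.single 1 2 1)
    (y : Matrix (Fin 3) (Fin 3) K)
    (hy : y = Matrix.single 1 0 1 + Matrix.single 2 1 1) :
    LinearIndependent K
      ![t, jordan t y, jordan (jordan t y) y, jordan (jordan (jordan t y) y) y] := by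
  subst ht hy
  rw [Fintype.linearIndependent_iff]
  intro g hg
  rw [Fin.sum_univ_four] at hg
  have H := Matrix.ext_iff.mpr hg
  have h01 := H 0 1
  have h00 := H 0 0
  have h10 := H 1 0
  have h20 := H 2 0
  simp [jordan, Matrix.mul_apply, Fin.sum_univ_succ,
    Matrix.single_apply_same, Matrix.single_apply_of_ne,
    Matrix.one_apply, Matrix.add_apply, Matrix.smul_apply] at h01 h00 h10 h20
  have hg0 : g 0 = 0 := h01
  have hg1 : g 1 = 0 := by rw [hg0] at h00; simpa using h00
  have hg2 : g 2 = 0 := by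
    have h3 : (3 : K) * g 2 = 0 := by rw [hg1] at h10; linear_combination h10
    rcases mul_eq_zero.1 h3 with h | h
    · exact absurd h hch3
    · exact h
  have hg3 : g 3 = 0 := by
    have h6 : (2 : K) * 3 * g 3 = 0 := by rw [hg2] at h20; linear_combination h20
    rcases mul_eq_zero.1 h6 with h | h
    · exact absurd h (mul_ne_zero hch2 hch3)
    · exact h
  intro i
  fin_cases i <;> assumption
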